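/- arXiv:1604.08733 — 2 statements merged into one kernel-verified Lean document; each statement's English description precedes it below -/
import Mathlib

section
/- Let D be a strongly connected balanced bipartite digraph of order 2a ≥ 8 with partite sets X and Y such that max{d(x), d(y)} ≥ 2a − 1 for every dominating pair of vertices {x, y}. Then for any directed cycle C in D of length m with 2 ≤ m ≤ 2a − 2, D contains a C-bypass. -/
open Finset

variable {V : Type*}

/-- Total degree (out-degree plus in-degree) of `x` in the digraph with arc relation `A`. -/
noncomputable def deg (A : V → V → Prop) (x : V) : ℕ :=
  Set.ncard {y | A x y} + Set.ncard {y | A y x}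

/-- The digraph with arc relation `A` is strongly connected. -/
def StrongConn (A : V → V → Prop) : Prop :=
  ∀ u v : V, Relation.ReflTransGen A u v

/-- `{x, y}` is a dominating pair: distinct vertices with a common out-neighbour. -/
def DomPair (A : V → V → Prop) (x y : V) : Prop :=
  x ≠ y ∧ ∃ z, A x z ∧ A y z

/-- `X, Y` is a bipartition of the digraph `A`: the two parts partition the vertex
set and every arc joins the two parts. -/
def IsBipartition (A : V → V → Prop) (X Y : Set V) : Prop :=
  Disjoint X Y ∧ X ∪ Y = Set.univ ∧
    ∀ u v, A u v → (u ∈ X ∧ v ∈ Y) ∨ (u ∈ Y ∧ v ∈ X)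

/-- A bypass of the vertex set `S`: a directed path with at least 3 vertices, distinct
endpoints, meeting `S` exactly in its two endpoints. -/
def HasBypass (A : V → V → Prop) (S : Set V) : Prop :=
  ∃ (x y : V) (mid : List V), mid ≠ [] ∧ x ≠ y ∧
    (x :: mid ++ [y]).Nodup ∧ (x :: mid ++ [y]).Chain' A ∧
    x ∈ S ∧ y ∈ S ∧ ∀ v ∈ mid, v ∉ S
lemma dup_split : ∀ (l : List V), ¬l.Nodup → ∃ (p : List V) (x : V) (q r : List V), l = p ++ x :: (q ++ x :: r) := by
  intro l h
  induction l with
  | nil => simp at h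
  | cons a tl ih =>
    by_cases ha : a ∈ tl
    · obtain ⟨q, r, rfl⟩ := List.append_of_mem ha
      exact ⟨[], a, q, r, by simp⟩
    · have : ¬tl.Nodup := by
        intro hn; exact h (List.nodup_cons.mpr ⟨ha, hn⟩)
      obtain ⟨p, x, q, r, rfl⟩ := ih this
      exact ⟨a :: p, x, q, r, by simp⟩

lemma bypass_of_walk {A : V → V → Prop} {S : Set V} :
    ∀ (n : ℕ) (ms : List V) (s t : V), ms.length ≤ n → s ∈ S → t ∈ S → s ≠ t → ms ≠ [] →
    (∀ v ∈ ms, v ∉ S) → List.Chain' A (s :: ms ++ [t]) → HasBypass A S := by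
  intro n
  induction n with
  | zero =>
    intro ms s t hlen _ _ _ hne _ _
    exact absurd (List.eq_nil_of_length_eq_zero (by omega)) hne
  | succ n ih =>
    intro ms s t hlen hs ht hst hne hmid hch
    by_cases hnd : (s :: ms ++ [t]).Nodup
    · exact ⟨s, t, ms, hne, hst, hnd, hch, hs, ht, hmid⟩
    · have hms : ¬ms.Nodup := by
        intro h
        apply hnd
        have hssm : s ∉ ms := fun hx => hmid s hx hs
        have htm : t ∉ ms := fun hx => hmid t hx ht
        have hA : s ∉ ms ++ [t] := by
          simp only [List.mem_append, List.mem_singleton]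
          rintro (h1 | rfl)
          exacts [hssm h1, hst rfl]
        have hB : (ms ++ [t]).Nodup := by
          rw [List.nodup_append]
          refine ⟨h, List.nodup_singleton t, ?_⟩
          intro x hx y hy hxy
          simp only [List.mem_singleton] at hy
          subst hy hxy
          exact htm hx
        exact List.nodup_cons.mpr ⟨hA, hB⟩
      obtain ⟨p, x, q, r, rfl⟩ := dup_split ms hms
      have hlen' : (p ++ x :: r).length ≤ n := by
        simp only [List.length_append, List.length_cons] at hlen ⊢; omega
      apply ih (p ++ x :: r) s t hlen' hs ht hst (by simp)
      · intro v hv; apply hmid; simp only [List.mem_append, List.mem_cons] at hv ⊢; tauto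
      · have e1 : s :: (p ++ x :: (q ++ x :: r)) ++ [t]
            = ((s :: p) ++ [x]) ++ ((q ++ [x]) ++ (r ++ [t])) := by simp
        rw [e1, List.Chain', List.isChain_append] at hch
        obtain ⟨h1, hmid2, h5⟩ := hch
        rw [List.isChain_append] at hmid2
        obtain ⟨h2, h3, h4⟩ := hmid2
        have e2 : s :: (p ++ x :: r) ++ [t] = ((s :: p) ++ [x]) ++ (r ++ [t]) := by simp
        rw [e2, List.Chain', List.isChain_append]
        refine ⟨h1, h3, ?_⟩
        intro y hy z hz
        apply h4 y _ z hz
        rw [List.getLast?_concat] at hy ⊢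
        exact hy

/-- Arcs staying outside `S`. -/
def RelOut (A : V → V → Prop) (S : Set V) (u v : V) : Prop := A u v ∧ u ∉ S ∧ v ∉ S

lemma reach_split_entry {A : V → V → Prop} {S : Set V} {u v : V}
    (h : Relation.ReflTransGen A u v) (hv : v ∉ S) :
    (u ∉ S ∧ Relation.ReflTransGen (RelOut A S) u v) ∨
      (∃ s r, s ∈ S ∧ r ∉ S ∧ A s r ∧ Relation.ReflTransGen (RelOut A S) r v) := by
  induction h using Relation.ReflTransGen.head_induction_on with
  | refl => exact Or.inl ⟨hv, .refl⟩
  | head harc hrest ih =>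
    rename_i x y
    rcases ih with ⟨hy, hr⟩ | ⟨s, r, hs, hrS, harc2, hr⟩
    · by_cases hx : x ∈ S
      · exact Or.inr ⟨x, y, hx, hy, harc, hr⟩
      · exact Or.inl ⟨hx, .head ⟨harc, hx, hy⟩ hr⟩
    · exact Or.inr ⟨s, r, hs, hrS, harc2, hr⟩

lemma reach_split_exit {A : V → V → Prop} {S : Set V} {u v : V}
    (h : Relation.ReflTransGen A u v) (hu : u ∉ S) :
    (v ∉ S ∧ Relation.ReflTransGen (RelOut A S) u v) ∨
      (∃ r s, r ∉ S ∧ s ∈ S ∧ Relation.ReflTransGen (RelOut A S) u r ∧ A r s) := by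
  induction h with
  | refl => exact Or.inl ⟨hu, .refl⟩
  | tail hr harc ih =>
    rename_i b c
    rcases ih with ⟨hb, hrb⟩ | w
    · by_cases hc : c ∈ S
      · exact Or.inr ⟨b, c, hb, hc, hrb, harc⟩
      · exact Or.inl ⟨hc, hrb.tail ⟨harc, hb, hc⟩⟩
    · exact Or.inr w

lemma chain_targets {R : V → V → Prop} : ∀ (l : List V) (a : V), List.Chain R a l → ∀ x ∈ l, ∃ y, R y x := by
  intro l
  induction l with
  | nil => intro a _ x hx; simp at hx
  | cons b tl ih =>
    intro a hc x hx
    rcases List.chain_cons.mp hc with ⟨hab, htl⟩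
    rcases List.mem_cons.mp hx with rfl | hx
    · exact ⟨a, hab⟩
    · exact ih b htl x hx

lemma ent_ext_eq {A : V → V → Prop} {S : Set V} (hnb : ¬HasBypass A S)
    {s t r1 r2 : V} (hs : s ∈ S) (ht : t ∈ S) (hr1 : r1 ∉ S)
    (h1 : A s r1) (hreach : Relation.ReflTransGen (RelOut A S) r1 r2) (h2 : A r2 t) :
    s = t := by
  by_contra hst
  apply hnb
  obtain ⟨l, hchain, hlast⟩ := List.exists_isChain_cons_of_relationReflTransGen hreach
  refine bypass_of_walk (A := A) (S := S) (r1 :: l).length (r1 :: l) s t le_rfl hs ht hst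
    (by simp) ?_ ?_
  · intro x hx
    rcases List.mem_cons.mp hx with rfl | hx
    · exact hr1
    · obtain ⟨y, hy⟩ := chain_targets l r1 hchain x hx
      exact hy.2.2
  · have hchA : List.Chain A s (r1 :: l) :=
      List.Chain.cons h1 (hchain.imp (fun _ _ h => h.1))
    have e1 : s :: (r1 :: l) ++ [t] = (s :: r1 :: l) ++ [t] := by simp
    rw [e1, List.Chain', List.isChain_append]
    refine ⟨hchA, by simp, ?_⟩
    intro x hx y hy
    simp only [List.head?_cons, Option.mem_def, Option.some.injEq] at hy
    subst hy
    have : (s :: r1 :: l).getLast? = some ((r1 :: l).getLast (by simp)) := by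
      rw [List.getLast?_eq_getLast (l := s :: r1 :: l) (by simp), List.getLast_cons (by simp)]
    rw [this] at hx
    simp only [Option.mem_def, Option.some.injEq] at hx
    subst hx
    rw [hlast]
    exact h2

lemma deg_le {A : V → V → Prop} {v : V} {N : Set V} (hfin : N.Finite)
    (h1 : ∀ u, A v u → u ∈ N) (h2 : ∀ u, A u v → u ∈ N) : deg A v ≤ 2 * N.ncard := by
  have o1 : Set.ncard {y | A v y} ≤ N.ncard := Set.ncard_le_ncard (fun y hy => h1 y hy) hfin
  have o2 : Set.ncard {y | A y v} ≤ N.ncard := Set.ncard_le_ncard (fun y hy => h2 y hy) hfin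
  unfold deg; omega

/-- If `D` is a strongly connected balanced bipartite digraph of order `2a ≥ 8`
satisfying `max {d(x), d(y)} ≥ 2a − 1` for every dominating pair, then every directed
cycle of length `m` with `2 ≤ m ≤ 2a − 2` has a bypass. -/
theorem stmt15 [Fintype V] (A : V → V → Prop) (X Y : Set V) (a : ℕ) (ha : 4 ≤ a)
    (hX : X.ncard = a) (hY : Y.ncard = a) (hbip : IsBipartition A X Y)
    (hstrong : StrongConn A)
    (hdeg : ∀ x y : V, DomPair A x y → 2 * a - 1 ≤ max (deg A x) (deg A y))
    (m : ℕ) (hm2 : 2 ≤ m) (hm : m ≤ 2 * a - 2)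
    (f : ZMod m → V) (hinj : Function.Injective f)
    (hcyc : ∀ i, A (f i) (f (i + 1))) :
    HasBypass A (Set.range f) := by
  classical
  by_contra hnb
  haveI : NeZero m := ⟨by omega⟩
  set S : Set V := Set.range f with hSdef
  have hfS : ∀ i, f i ∈ S := fun i => ⟨i, rfl⟩
  have hSm : S.ncard = m := by
    rw [hSdef, ← Set.image_univ, Set.ncard_image_of_injective _ hinj, Set.ncard_univ,
      Nat.card_eq_fintype_card, ZMod.card]
  -- the attachment function
  have key : ∀ v, v ∉ S → ∃ s, s ∈ S ∧
      (∃ r, r ∉ S ∧ A s r ∧ Relation.ReflTransGen (RelOut A S) r v) ∧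
      (∃ r, r ∉ S ∧ Relation.ReflTransGen (RelOut A S) v r ∧ A r s) ∧
      (∀ t r, t ∈ S → r ∉ S → A t r → Relation.ReflTransGen (RelOut A S) r v → t = s) ∧
      (∀ t r, t ∈ S → r ∉ S → Relation.ReflTransGen (RelOut A S) v r → A r t → t = s) := by
    intro v hv
    rcases reach_split_entry (hstrong (f 0) v) hv with ⟨h0, _⟩ | ⟨s, r, hs, hr, harc, hreach⟩
    · exact absurd (hfS 0) h0
    rcases reach_split_exit (hstrong v (f 0)) (by exact hv) with ⟨h0, _⟩ |
      ⟨r2, t, hr2, ht, hreach2, harc2⟩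
    · exact absurd (hfS 0) h0
    have hst : s = t := ent_ext_eq hnb hs ht hr harc (hreach.trans hreach2) harc2
    refine ⟨s, hs, ⟨r, hr, harc, hreach⟩, ⟨r2, hr2, hreach2, by rw [hst]; exact harc2⟩, ?_, ?_⟩
    · intro t' r' ht' hr' harc' hreach'
      exact (ent_ext_eq hnb ht' ht hr' harc' (hreach'.trans hreach2) harc2).trans hst.symm
    · intro t' r' ht' hr' hreach' harc'
      exact (ent_ext_eq hnb hs ht' hr harc (hreach.trans hreach') harc').symm
  choose! att hattS hattEnt hattExt hattEntU hattExtU using key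
  have F1 : ∀ u v, u ∉ S → v ∉ S → A u v → att u = att v := by
    intro u v hu hv harc
    obtain ⟨r, hr, ha', hre⟩ := hattEnt u hu
    exact hattEntU v hv (att u) r (hattS u hu) hr ha' (hre.tail ⟨harc, hu, hv⟩)
  have F2in : ∀ v s, v ∉ S → s ∈ S → A s v → s = att v := by
    intro v s hv hs harc
    exact hattEntU v hv s v hs hv harc .refl
  have F2out : ∀ v s, v ∉ S → s ∈ S → A v s → s = att v := by
    intro v s hv hs harc
    exact hattExtU v hv s v hs hv .refl harc
  have F3 : ∀ v, v ∉ S → ∃ w, w ∉ S ∧ att w = att v ∧ A w (att v) := by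
    intro v hv
    obtain ⟨r, hr, hre, harc⟩ := hattExt v hv
    exact ⟨r, hr, (hattExtU r hr (att v) r (hattS v hv) hr .refl harc).symm, harc⟩
  -- counting: each part meets the cycle in m/2 vertices
  have cnt : ∀ P Q : Set V, Disjoint P Q → P ∪ Q = Set.univ →
      (∀ u v, A u v → (u ∈ P ∧ v ∈ Q) ∨ (u ∈ Q ∧ v ∈ P)) → 2 * (S ∩ P).ncard = m := by
    intro P Q hd hu hc
    have hcov : ∀ v : V, v ∉ P → v ∈ Q := by
      intro v hv
      have h2 : v ∈ P ∪ Q := hu ▸ Set.mem_univ v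
      rcases h2 with h | h
      · exact absurd h hv
      · exact h
    set T : Finset (ZMod m) := Finset.univ.filter (fun i => f i ∈ P) with hT
    have halt : ∀ j : ZMod m, f j ∈ P ↔ f (j + 1) ∉ P := by
      intro j
      rcases hc (f j) (f (j + 1)) (hcyc j) with ⟨h1, h2⟩ | ⟨h1, h2⟩
      · exact ⟨fun _ => Set.disjoint_right.mp hd h2, fun _ => h1⟩
      · exact ⟨fun hj => absurd hj (Set.disjoint_right.mp hd h1),
          fun hj => absurd h2 (fun h2' => hj h2')⟩
    have hTc : (S ∩ P).ncard = T.card := by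
      have himg : S ∩ P = f '' (T : Set (ZMod m)) := by
        ext v
        constructor
        · rintro ⟨⟨i, rfl⟩, hp⟩
          exact ⟨i, by simp [hT, hp], rfl⟩
        · rintro ⟨i, hi, rfl⟩
          simp only [hT, Finset.coe_filter, Finset.mem_univ, true_and, Set.mem_setOf_eq] at hi
          exact ⟨⟨i, rfl⟩, hi⟩
      rw [himg, Set.ncard_image_of_injective _ hinj, Set.ncard_coe_finset]
    have hcompl : Tᶜ = T.image (· + 1) := by
      ext j
      simp only [Finset.mem_compl, hT, Finset.mem_filter, Finset.mem_univ, true_and,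
        Finset.mem_image]
      constructor
      · intro hj
        have h' := halt (j - 1)
        rw [sub_add_cancel] at h'
        exact ⟨j - 1, h'.mpr hj, by ring⟩
      · rintro ⟨i, hi, rfl⟩
        exact (halt i).mp hi
    have h1 : Tᶜ.card = Fintype.card (ZMod m) - T.card := Finset.card_compl T
    have h2 : (T.image (· + 1)).card = T.card :=
      Finset.card_image_of_injective T (add_left_injective 1)
    have h3 : T.card ≤ Fintype.card (ZMod m) := Finset.card_le_univ T
    rw [hcompl, h2] at h1
    rw [hTc]
    have := ZMod.card m
    omega
  have hsplit : ∀ P : Set V, P.ncard = (S ∩ P).ncard + (Sᶜ ∩ P).ncard := by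
    intro P
    rw [← Set.ncard_union_eq (by
      rw [Set.disjoint_left]
      rintro v ⟨hv, _⟩ ⟨hv', _⟩
      exact hv' hv) (Set.toFinite _) (Set.toFinite _)]
    congr 1
    ext v
    by_cases hv : v ∈ S
    · simp [hv]
    · simp [hv]
  -- the star lemma
  have star : ∀ P Q : Set V, Disjoint P Q → P ∪ Q = Set.univ →
      (∀ u v, A u v → (u ∈ P ∧ v ∈ Q) ∨ (u ∈ Q ∧ v ∈ P)) → P.ncard = a → Q.ncard = a →
      ∀ i : ZMod m, f i ∈ P → (∃ v, v ∉ S ∧ att v = f i) →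
      (m = 2 ∧ {w | w ∉ S ∧ att w = f i} ∩ P = Sᶜ ∩ P) ∨
        ({w | w ∉ S ∧ att w = f (i - 1)} ∩ P = Sᶜ ∩ P) := by
    intro P Q hd hu hc hPa hQa i hiP hex
    obtain ⟨v, hv, hva⟩ := hex
    have hiff : ∀ u w : V, A u w → (u ∈ P ↔ w ∈ Q) := by
      intro u w h
      rcases hc u w h with ⟨h1, h2⟩ | ⟨h1, h2⟩
      · exact ⟨fun _ => h2, fun _ => h1⟩
      · exact ⟨fun hu' => absurd h1 (Set.disjoint_left.mp hd hu'),
          fun hw' => absurd h2 (fun h2' => Set.disjoint_left.mp hd h2' hw')⟩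
    have hiff' : ∀ u w : V, A u w → (u ∈ Q ↔ w ∈ P) := by
      intro u w h
      rcases hc u w h with ⟨h1, h2⟩ | ⟨h1, h2⟩
      · exact ⟨fun hu' => absurd hu' (Set.disjoint_left.mp hd h1),
          fun hw' => absurd hw' (Set.disjoint_right.mp hd h2)⟩
      · exact ⟨fun _ => h2, fun _ => h1⟩
    have hparc : A (f (i - 1)) (f i) := by
      have := hcyc (i - 1)
      rwa [sub_add_cancel] at this
    have hpQ : f (i - 1) ∈ Q := by
      rcases hc _ _ hparc with ⟨h1, h2⟩ | ⟨h1, h2⟩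
      · exact absurd h2 (Set.disjoint_left.mp hd hiP)
      · exact h1
    obtain ⟨w, hw, hwa, hwarc⟩ := F3 v hv
    rw [hva] at hwa hwarc
    have hwQ : w ∈ Q := by
      rcases hc _ _ hwarc with ⟨h1, h2⟩ | ⟨h1, h2⟩
      · exact absurd h2 (Set.disjoint_left.mp hd hiP)
      · exact h1
    have hdom := hdeg w (f (i - 1)) ⟨fun h => hw (h ▸ hfS (i - 1)), f i, hwarc, hparc⟩
    -- degree bound for w
    have hdegw : deg A w ≤ 2 * (1 + ({x | x ∉ S ∧ att x = f i} ∩ P).ncard) := by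
      have hnb' : ∀ u, (A w u ∨ A u w) → u ∈ ({f i} ∪ ({x | x ∉ S ∧ att x = f i} ∩ P) : Set V) := by
        intro u harc'
        have huP : u ∈ P := by
          rcases harc' with h | h
          · exact (hiff' w u h).mp hwQ
          · exact (hiff u w h).mpr hwQ
        by_cases hu : u ∈ S
        · left
          rcases harc' with h | h
          · have := F2out w u hw hu h; rw [← hwa, ← this]; rfl
          · have := F2in w u hw hu h; rw [← hwa, ← this]; rfl
        · right
          refine ⟨⟨hu, ?_⟩, huP⟩
          rcases harc' with h | h
          · rw [← F1 w u hw hu h]; exact hwa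
          · rw [F1 u w hu hw h]; exact hwa
      have hb := deg_le (Set.toFinite _) (fun u h => hnb' u (Or.inl h)) (fun u h => hnb' u (Or.inr h))
      have hu2 := Set.ncard_union_le ({f i} : Set V) ({x | x ∉ S ∧ att x = f i} ∩ P)
      rw [Set.ncard_singleton] at hu2
      omega
    -- degree bound for the predecessor
    have hdegp : deg A (f (i - 1)) ≤
        2 * ((S ∩ P).ncard + ({x | x ∉ S ∧ att x = f (i - 1)} ∩ P).ncard) := by
      have hnb' : ∀ u, (A (f (i - 1)) u ∨ A u (f (i - 1))) →
          u ∈ ((S ∩ P) ∪ ({x | x ∉ S ∧ att x = f (i - 1)} ∩ P)) := by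
        intro u harc'
        have huP : u ∈ P := by
          rcases harc' with h | h
          · exact (hiff' _ u h).mp hpQ
          · exact (hiff u _ h).mpr hpQ
        by_cases hu : u ∈ S
        · exact Or.inl ⟨hu, huP⟩
        · right
          refine ⟨⟨hu, ?_⟩, huP⟩
          rcases harc' with h | h
          · exact (F2in u _ hu (hfS _) h).symm
          · exact (F2out u _ hu (hfS _) h).symm
      have hb := deg_le (Set.toFinite _) (fun u h => hnb' u (Or.inl h)) (fun u h => hnb' u (Or.inr h))
      have hu2 := Set.ncard_union_le (S ∩ P) ({x | x ∉ S ∧ att x = f (i - 1)} ∩ P)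
      omega
    have h2k := cnt P Q hd hu hc
    have hsp := hsplit P
    rw [hPa] at hsp
    have hsub1 : {x | x ∉ S ∧ att x = f i} ∩ P ⊆ Sᶜ ∩ P := by
      rintro x ⟨⟨hx, _⟩, hxP⟩; exact ⟨hx, hxP⟩
    have hsub2 : {x | x ∉ S ∧ att x = f (i - 1)} ∩ P ⊆ Sᶜ ∩ P := by
      rintro x ⟨⟨hx, _⟩, hxP⟩; exact ⟨hx, hxP⟩
    have hle1 := Set.ncard_le_ncard hsub1 (Set.toFinite _)
    have hle2 := Set.ncard_le_ncard hsub2 (Set.toFinite _)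
    rcases le_max_iff.mp hdom with hcase | hcase
    · left
      constructor
      · omega
      · exact Set.eq_of_subset_of_ncard_le hsub1 (by omega) (Set.toFinite _)
    · right
      exact Set.eq_of_subset_of_ncard_le hsub2 (by omega) (Set.toFinite _)
  -- arithmetic helpers in ZMod m
  have hdvd2 : ∀ i0 : ZMod m, i0 - 1 - 1 = i0 → m = 2 := by
    intro i0 h
    rw [sub_sub] at h
    have h1 : (1 + 1 : ZMod m) = 0 := sub_eq_self.mp h
    have h2 : ((2 : ℕ) : ZMod m) = 0 := by push_cast; rwa [one_add_one_eq_two] at h1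
    have h3 := (ZMod.natCast_eq_zero_iff 2 m).mp h2
    have h4 := Nat.le_of_dvd (by norm_num) h3
    omega
  have hdvd2' : m = 2 → ∀ i0 : ZMod m, i0 - 1 - 1 = i0 := by
    intro hmm i0
    have h2 : ((2 : ℕ) : ZMod m) = 0 := by
      rw [show (2 : ℕ) = m from hmm.symm]; exact ZMod.natCast_self m
    rw [sub_sub, sub_eq_self, one_add_one_eq_two]
    exact_mod_cast h2
  have hne10 : ∀ i0 : ZMod m, f (i0 - 1) ≠ f i0 := by
    intro i0 h
    have h0 := hinj h
    have h1 : (1 : ZMod m) = 0 := sub_eq_self.mp h0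
    have h2 : ((1 : ℕ) : ZMod m) = 0 := by push_cast; exact h1
    have h3 := (ZMod.natCast_eq_zero_iff 1 m).mp h2
    have h4 := Nat.le_of_dvd (by norm_num) h3
    omega
  -- a vertex off the cycle
  have hUniv : (Set.univ : Set V).ncard = 2 * a := by
    rw [← hbip.2.1, Set.ncard_union_eq hbip.1 (Set.toFinite _) (Set.toFinite _), hX, hY]; ring
  have hv0ex : ∃ v0, v0 ∉ S := by
    by_contra h
    push_neg at h
    have hSu : S = Set.univ := Set.eq_univ_of_forall h
    rw [hSu, hUniv] at hSm
    omega
  obtain ⟨v0, hv0⟩ := hv0ex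
  -- main case analysis, symmetric in the two parts
  have main : ∀ P Q : Set V, Disjoint P Q → P ∪ Q = Set.univ →
      (∀ u v, A u v → (u ∈ P ∧ v ∈ Q) ∨ (u ∈ Q ∧ v ∈ P)) → P.ncard = a → Q.ncard = a →
      att v0 ∈ P → False := by
    intro P Q hd hu hc hPa hQa hs0P
    have hiff : ∀ u w : V, A u w → (u ∈ P ↔ w ∈ Q) := by
      intro u w h
      rcases hc u w h with ⟨h1, h2⟩ | ⟨h1, h2⟩
      · exact ⟨fun _ => h2, fun _ => h1⟩
      · exact ⟨fun hu' => absurd h1 (Set.disjoint_left.mp hd hu'),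
          fun hw' => absurd h2 (fun h2' => Set.disjoint_left.mp hd h2' hw')⟩
    have hiff' : ∀ u w : V, A u w → (u ∈ Q ↔ w ∈ P) := by
      intro u w h
      rcases hc u w h with ⟨h1, h2⟩ | ⟨h1, h2⟩
      · exact ⟨fun hu' => absurd hu' (Set.disjoint_left.mp hd h1),
          fun hw' => absurd hw' (Set.disjoint_right.mp hd h2)⟩
      · exact ⟨fun _ => h2, fun _ => h1⟩
    obtain ⟨i0, hi0⟩ := hattS v0 hv0
    have hs0P' : f i0 ∈ P := hi0 ▸ hs0P
    have hparc : A (f (i0 - 1)) (f i0) := by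
      have := hcyc (i0 - 1); rwa [sub_add_cancel] at this
    have hpQ : f (i0 - 1) ∈ Q := (hiff' _ _ hparc).mpr hs0P'
    have h2k := cnt P Q hd hu hc
    have h2k' := cnt Q P hd.symm (by rw [Set.union_comm]; exact hu)
      (fun u v h => (hc u v h).symm)
    have hspP := hsplit P
    rw [hPa] at hspP
    have hspQ := hsplit Q
    rw [hQa] at hspQ
    have hstar0 := star P Q hd hu hc hPa hQa i0 hs0P' ⟨v0, hv0, hi0.symm⟩
    rcases hstar0 with ⟨hm2', hfull0⟩ | hfullp
    · -- m = 2 and all off-vertices of P attach at f i0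
      by_cases hRp0 : ∃ v, v ∉ S ∧ att v = f (i0 - 1)
      · have hstar1 := star Q P hd.symm (by rw [Set.union_comm]; exact hu)
          (fun u v h => (hc u v h).symm) hQa hPa (i0 - 1) hpQ hRp0
        rcases hstar1 with ⟨_, hfull1⟩ | hfull2
        · -- E2 endgame
          have hScPne : (Sᶜ ∩ P).ncard ≠ 0 := by omega
          obtain ⟨x, hx⟩ := Set.nonempty_of_ncard_ne_zero hScPne
          obtain ⟨hxS, hxP⟩ := hx
          have hxin : x ∈ Sᶜ ∩ P := ⟨hxS, hxP⟩
          rw [← hfull0] at hxin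
          have hxa : att x = f i0 := hxin.1.2
          obtain ⟨r, hr, hre, harc⟩ := hattExt x hxS
          rcases hre.cases_head with rfl | ⟨c, hrc, _⟩
          · rw [hxa] at harc
            have hfiQ : f i0 ∈ Q := (hiff x (f i0) harc).mp hxP
            exact Set.disjoint_left.mp hd hs0P' hfiQ
          · obtain ⟨hxc, _, hcS⟩ := hrc
            have hcQ : c ∈ Q := (hiff x c hxc).mp hxP
            have hcIn : c ∈ Sᶜ ∩ Q := ⟨hcS, hcQ⟩
            rw [← hfull1] at hcIn
            have hcatt : att c = f (i0 - 1) := hcIn.1.2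
            have hcatt2 : att c = att x := (F1 x c hxS hcS hxc).symm
            rw [hxa] at hcatt2
            rw [hcatt2] at hcatt
            exact hne10 i0 hcatt.symm
        · -- contradiction with hRp0
          have hc2 : i0 - 1 - 1 = i0 := hdvd2' hm2' i0
          rw [hc2] at hfull2
          obtain ⟨v, hvS, hva⟩ := hRp0
          have hvPQ : v ∈ P ∪ Q := hu ▸ Set.mem_univ v
          rcases hvPQ with hP | hQ
          · have hvin : v ∈ Sᶜ ∩ P := ⟨hvS, hP⟩
            rw [← hfull0] at hvin
            exact hne10 i0 (hva.symm.trans hvin.1.2)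
          · have hvin : v ∈ Sᶜ ∩ Q := ⟨hvS, hQ⟩
            rw [← hfull2] at hvin
            exact hne10 i0 (hva.symm.trans hvin.1.2)
      · -- E3 endgame : no vertex attaches at the predecessor
        push_neg at hRp0
        obtain ⟨w, hw, hwa, hwarc⟩ := F3 v0 hv0
        rw [← hi0] at hwa hwarc
        have hwQ : w ∈ Q := (hiff' w (f i0) hwarc).mpr hs0P'
        have hdp := hdeg w (f (i0 - 1)) ⟨fun h => hw (h ▸ hfS (i0 - 1)), f i0, hwarc, hparc⟩
        have hdegp : deg A (f (i0 - 1)) ≤ 2 * (S ∩ P).ncard := by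
          apply deg_le (Set.toFinite _)
          · intro u h
            have huP : u ∈ P := (hiff' _ u h).mp hpQ
            by_cases hu' : u ∈ S
            · exact ⟨hu', huP⟩
            · exact absurd (F2in u _ hu' (hfS _) h).symm (hRp0 u hu')
          · intro u h
            have huP : u ∈ P := (hiff u _ h).mpr hpQ
            by_cases hu' : u ∈ S
            · exact ⟨hu', huP⟩
            · exact absurd (F2out u _ hu' (hfS _) h).symm (hRp0 u hu')
        have hdw : 2 * a - 1 ≤ deg A w := by
          rcases le_max_iff.mp hdp with h | h
          · exact h
          · omega
        have hON : {y | A w y} ⊆ {f i0} ∪ (Sᶜ ∩ P) := by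
          intro u hu'
          have huP : u ∈ P := (hiff' w u hu').mp hwQ
          by_cases hu'' : u ∈ S
          · left
            have := F2out w u hw hu'' hu'
            rw [hwa] at this
            exact this.symm ▸ rfl
          · exact Or.inr ⟨hu'', huP⟩
        have hIN : {y | A y w} ⊆ {f i0} ∪ (Sᶜ ∩ P) := by
          intro u hu'
          have huP : u ∈ P := (hiff u w hu').mpr hwQ
          by_cases hu'' : u ∈ S
          · left
            have := F2in w u hw hu'' hu'
            rw [hwa] at this
            exact this.symm ▸ rfl
          · exact Or.inr ⟨hu'', huP⟩
        have hNcard : ({f i0} ∪ (Sᶜ ∩ P) : Set V).ncard ≤ 1 + (Sᶜ ∩ P).ncard := by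
          have := Set.ncard_union_le ({f i0} : Set V) (Sᶜ ∩ P)
          rwa [Set.ncard_singleton] at this
        have hOle : {y | A w y}.ncard ≤ 1 + (Sᶜ ∩ P).ncard :=
          le_trans (Set.ncard_le_ncard hON (Set.toFinite _)) hNcard
        have hIle : {y | A y w}.ncard ≤ 1 + (Sᶜ ∩ P).ncard :=
          le_trans (Set.ncard_le_ncard hIN (Set.toFinite _)) hNcard
        have hdegw_eq : deg A w = {y | A w y}.ncard + {y | A y w}.ncard := rfl
        have hIsub : {y | A y w} ⊆ ({y | A y w} ∩ (Sᶜ ∩ P)) ∪ {f i0} := by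
          intro u hu'
          rcases hIN hu' with h | h
          · exact Or.inr h
          · exact Or.inl ⟨hu', h⟩
        have hIle2 : {y | A y w}.ncard ≤ ({y | A y w} ∩ (Sᶜ ∩ P)).ncard + 1 := by
          refine le_trans (Set.ncard_le_ncard hIsub (Set.toFinite _)) ?_
          have := Set.ncard_union_le ({y | A y w} ∩ (Sᶜ ∩ P)) ({f i0} : Set V)
          rwa [Set.ncard_singleton] at this
        have h1lt : 1 < ({y | A y w} ∩ (Sᶜ ∩ P)).ncard := by omega
        obtain ⟨v1, hv1, v2, hv2, hv12⟩ := (Set.one_lt_ncard (Set.toFinite _)).mp h1lt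
        have hdp2 := hdeg v1 v2 ⟨hv12, w, hv1.1, hv2.1⟩
        have hsmall : ∀ x, x ∈ {y | A y w} ∩ (Sᶜ ∩ P) → deg A x ≤ 2 * (Sᶜ ∩ Q).ncard := by
          intro x hx
          obtain ⟨hxI, hxS, hxP⟩ := hx
          have hxin : x ∈ Sᶜ ∩ P := ⟨hxS, hxP⟩
          rw [← hfull0] at hxin
          have hxa : att x = f i0 := hxin.1.2
          apply deg_le (Set.toFinite _)
          · intro u h
            have huQ : u ∈ Q := (hiff x u h).mp hxP
            by_cases hu' : u ∈ S
            · exfalso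
              have heq := F2out x u hxS hu' h
              rw [hxa] at heq
              exact Set.disjoint_left.mp hd (heq ▸ hs0P') huQ
            · exact ⟨hu', huQ⟩
          · intro u h
            have huQ : u ∈ Q := (hiff' u x h).mpr hxP
            by_cases hu' : u ∈ S
            · exfalso
              have heq := F2in x u hxS hu' h
              rw [hxa] at heq
              exact Set.disjoint_left.mp hd (heq ▸ hs0P') huQ
            · exact ⟨hu', huQ⟩
        have d1 := hsmall v1 hv1
        have d2 := hsmall v2 hv2
        rcases le_max_iff.mp hdp2 with h | h <;> omega
    · -- all off-vertices of P attach at the predecessor f (i0 - 1)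
      have hScPne : (Sᶜ ∩ P).ncard ≠ 0 := by omega
      obtain ⟨w0, hw0⟩ := Set.nonempty_of_ncard_ne_zero hScPne
      have hw0' : w0 ∈ {w | w ∉ S ∧ att w = f (i0 - 1)} ∩ P := by rw [hfullp]; exact hw0
      have hRp0ne : ∃ v, v ∉ S ∧ att v = f (i0 - 1) := ⟨w0, hw0'.1⟩
      have hstar1 := star Q P hd.symm (by rw [Set.union_comm]; exact hu)
        (fun u v h => (hc u v h).symm) hQa hPa (i0 - 1) hpQ hRp0ne
      rcases hstar1 with ⟨hmm, hfull1⟩ | hfull2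
      · -- every off-vertex attaches at f (i0-1): contradiction with v0
        have hvPQ : v0 ∈ P ∪ Q := hu ▸ Set.mem_univ v0
        rcases hvPQ with hP | hQ
        · have hvin : v0 ∈ Sᶜ ∩ P := ⟨hv0, hP⟩
          rw [← hfullp] at hvin
          have := hvin.1.2
          rw [← hi0] at this
          exact hne10 i0 this.symm
        · have hvin : v0 ∈ Sᶜ ∩ Q := ⟨hv0, hQ⟩
          rw [← hfull1] at hvin
          have := hvin.1.2
          rw [← hi0] at this
          exact hne10 i0 this.symm
      · by_cases hc2 : i0 - 1 - 1 = i0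
        · -- E1 endgame
          have hmm : m = 2 := hdvd2 i0 hc2
          rw [hc2] at hfull2
          have hRs0P : ∀ x, x ∈ Sᶜ ∩ P → att x = f (i0 - 1) := by
            intro x hx
            rw [← hfullp] at hx
            exact hx.1.2
          have hArc : ∀ x, x ∈ Sᶜ ∩ Q → A x (f i0) := by
            intro x hx
            have hx' : x ∈ {w | w ∉ S ∧ att w = f i0} ∩ Q := by rw [hfull2]; exact hx
            obtain ⟨⟨hxS, hxa⟩, hxQ⟩ := hx'
            obtain ⟨r, hr, hre, harc⟩ := hattExt x hxS
            rcases hre.cases_head with rfl | ⟨c, hrc, _⟩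
            · rwa [hxa] at harc
            · obtain ⟨hxc, _, hcS⟩ := hrc
              exfalso
              have hcatt : att c = f i0 := by rw [← F1 x c hxS hcS hxc]; exact hxa
              have hcP : c ∈ P := (hiff' x c hxc).mp hxQ
              have hcE := hRs0P c ⟨hcS, hcP⟩
              rw [hcatt] at hcE
              exact hne10 i0 hcE.symm
          have h1lt : 1 < (Sᶜ ∩ Q).ncard := by omega
          obtain ⟨v1, hv1, v2, hv2, hv12⟩ := (Set.one_lt_ncard (Set.toFinite _)).mp h1lt
          have hdp := hdeg v1 v2 ⟨hv12, f i0, hArc v1 hv1, hArc v2 hv2⟩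
          have hsmall : ∀ x, x ∈ Sᶜ ∩ Q → deg A x ≤ 2 := by
            intro x hx
            obtain ⟨hxS, hxQ⟩ := hx
            have hx' : x ∈ {w | w ∉ S ∧ att w = f i0} ∩ Q := by rw [hfull2]; exact ⟨hxS, hxQ⟩
            have hxa : att x = f i0 := hx'.1.2
            have hb : deg A x ≤ 2 * ({f i0} : Set V).ncard := by
              apply deg_le (Set.toFinite _)
              · intro u h
                have huP : u ∈ P := (hiff' x u h).mp hxQ
                by_cases hu' : u ∈ S
                · have := F2out x u hxS hu' h
                  rw [hxa] at this
                  exact this.symm ▸ rfl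
                · exfalso
                  have hE := hRs0P u ⟨hu', huP⟩
                  have : att u = att x := (F1 x u hxS hu' h).symm
                  rw [hxa] at this
                  rw [this] at hE
                  exact hne10 i0 hE.symm
              · intro u h
                have huP : u ∈ P := (hiff u x h).mpr hxQ
                by_cases hu' : u ∈ S
                · have := F2in x u hxS hu' h
                  rw [hxa] at this
                  exact this.symm ▸ rfl
                · exfalso
                  have hE := hRs0P u ⟨hu', huP⟩
                  have : att u = att x := F1 u x hu' hxS h
                  rw [hxa] at this
                  rw [this] at hE
                  exact hne10 i0 hE.symm
            rwa [Set.ncard_singleton] at hb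
          have d1 := hsmall v1 hv1
          have d2 := hsmall v2 hv2
          rcases le_max_iff.mp hdp with h | h <;> omega
        · -- i0 - 2 ≠ i0 : the two full classes leave nothing for v0
          have hvPQ : v0 ∈ P ∪ Q := hu ▸ Set.mem_univ v0
          rcases hvPQ with hP | hQ
          · have hvin : v0 ∈ Sᶜ ∩ P := ⟨hv0, hP⟩
            rw [← hfullp] at hvin
            have := hvin.1.2
            rw [← hi0] at this
            exact hne10 i0 this.symm
          · have hvin : v0 ∈ Sᶜ ∩ Q := ⟨hv0, hQ⟩
            rw [← hfull2] at hvin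
            have := hvin.1.2
            rw [← hi0] at this
            exact hc2 (hinj this).symm
  have hs0S : att v0 ∈ S := hattS v0 hv0
  have hPQ : att v0 ∈ X ∪ Y := hbip.2.1 ▸ Set.mem_univ _
  rcases hPQ with hP | hQ
  · exact main X Y hbip.1 hbip.2.1 hbip.2.2 hX hY hP
  · exact main Y X hbip.1.symm (by rw [Set.union_comm]; exact hbip.2.1)
      (fun u v h => (hbip.2.2 u v h).symm) hY hX hQ
end

section
/- Let D be a strongly connected balanced bipartite digraph of order 2a with partite sets X and Y whose underlying graph UG(D) is not 2-connected, say V(D) = A ∪ B ∪ {u} with A, B nonempty and disjoint, u ∉ A ∪ B, and no arcs between A and B. Then there exist vertices x ∈ A and y ∈ B forming a dominating pair with common out-neighbour u, and this pair satisfies d(x) + d(y) ≤ 2a + 2. -/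
open Finset

variable {V : Type*}

lemma exists_arc_to_u (Arc : V → V → Prop) (A B : Set V) (u : V)
    (hcover : A ∪ B ∪ {u} = Set.univ)
    (hdisj : Disjoint A B)
    (hnoarc : ∀ x ∈ A, ∀ y ∈ B, ¬ Arc x y ∧ ¬ Arc y x)
    {v b : V} (hb : b ∈ B) (hpath : Relation.ReflTransGen Arc v b) (hv : v ∈ A) :
    ∃ x ∈ A, Arc x u := by
  induction hpath using Relation.ReflTransGen.head_induction_on with
  | refl => exact absurd hb (Set.disjoint_left.mp hdisj hv)
  | head harc hpath' ih =>
    rename_i p q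
    have hq : q ∈ A ∪ B ∪ {u} := hcover ▸ Set.mem_univ q
    rcases hq with (hq | hq) | hq
    · exact ih hq
    · exact absurd harc (hnoarc _ hv _ hq).1
    · exact ⟨p, hv, by simpa [Set.mem_singleton_iff.mp hq] using harc⟩

lemma deg_le_of_subset [Fintype V] (Arc : V → V → Prop) (x : V) (S : Set V)
    (h1 : {z | Arc x z} ⊆ S) (h2 : {z | Arc z x} ⊆ S) :
    deg Arc x ≤ 2 * S.ncard := by
  have e1 := Set.ncard_le_ncard h1 (Set.toFinite S)
  have e2 := Set.ncard_le_ncard h2 (Set.toFinite S)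
  unfold deg; omega

lemma count_lemma [Fintype V] (P A B : Set V) (u : V) (hdisj : Disjoint A B)
    (hu : u ∉ A ∪ B) (hcover : A ∪ B ∪ {u} = Set.univ) (huP : u ∈ P) :
    (P ∩ (A ∪ {u})).ncard + (P ∩ (B ∪ {u})).ncard = P.ncard + 1 := by
  have hun : (P ∩ (A ∪ {u})) ∪ (P ∩ (B ∪ {u})) = P := by
    rw [← Set.inter_union_distrib_left]
    have : (A ∪ {u}) ∪ (B ∪ {u}) = A ∪ B ∪ {u} := by
      ext z; simp; tauto
    rw [this, hcover, Set.inter_univ]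
  have hint : (P ∩ (A ∪ {u})) ∩ (P ∩ (B ∪ {u})) = {u} := by
    ext z
    simp only [Set.mem_inter_iff, Set.mem_union, Set.mem_singleton_iff]
    constructor
    · rintro ⟨⟨_, hzA | h1⟩, ⟨_, hzB | h2⟩⟩
      · exact absurd hzB (Set.disjoint_left.mp hdisj hzA)
      · exact h2
      · exact h1
      · exact h1
    · rintro rfl
      simp only [Set.mem_union] at hu
      tauto
  have := Set.ncard_union_add_ncard_inter (P ∩ (A ∪ {u})) (P ∩ (B ∪ {u}))
    (Set.toFinite _) (Set.toFinite _)
  rw [hun, hint, Set.ncard_singleton] at this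
  omega

lemma main_bound [Fintype V] (Arc : V → V → Prop) (P A B : Set V) (u x y : V)
    (hdisj : Disjoint A B) (hu : u ∉ A ∪ B) (hcover : A ∪ B ∪ {u} = Set.univ)
    (huP : u ∈ P) (hnoarc : ∀ x ∈ A, ∀ y ∈ B, ¬ Arc x y ∧ ¬ Arc y x)
    (hx : x ∈ A) (hy : y ∈ B)
    (hPx : ∀ z, Arc x z → z ∈ P) (hPx' : ∀ z, Arc z x → z ∈ P)
    (hPy : ∀ z, Arc y z → z ∈ P) (hPy' : ∀ z, Arc z y → z ∈ P) :
    deg Arc x + deg Arc y ≤ 2 * P.ncard + 2 := by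
  have hxA : ∀ z, (Arc x z ∨ Arc z x) → z ∈ A ∪ {u} := by
    intro z hz
    have hzu : z ∈ A ∪ B ∪ {u} := hcover ▸ Set.mem_univ z
    rcases hzu with (h | h) | h
    · exact Or.inl h
    · rcases hz with hz | hz
      · exact absurd hz (hnoarc _ hx _ h).1
      · exact absurd hz (hnoarc _ hx _ h).2
    · exact Or.inr h
  have hyB : ∀ z, (Arc y z ∨ Arc z y) → z ∈ B ∪ {u} := by
    intro z hz
    have hzu : z ∈ A ∪ B ∪ {u} := hcover ▸ Set.mem_univ z
    rcases hzu with (h | h) | h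
    · rcases hz with hz | hz
      · exact absurd hz (hnoarc _ h _ hy).2
      · exact absurd hz (hnoarc _ h _ hy).1
    · exact Or.inl h
    · exact Or.inr h
  have d1 : deg Arc x ≤ 2 * (P ∩ (A ∪ {u})).ncard :=
    deg_le_of_subset Arc x _ (fun z hz => ⟨hPx z hz, hxA z (Or.inl hz)⟩)
      (fun z hz => ⟨hPx' z hz, hxA z (Or.inr hz)⟩)
  have d2 : deg Arc y ≤ 2 * (P ∩ (B ∪ {u})).ncard :=
    deg_le_of_subset Arc y _ (fun z hz => ⟨hPy z hz, hyB z (Or.inl hz)⟩)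
      (fun z hz => ⟨hPy' z hz, hyB z (Or.inr hz)⟩)
  have := count_lemma P A B u hdisj hu hcover huP
  omega

/-- If `UG(D)` is separated by a vertex `u`, with `V(D) = A ∪ B ∪ {u}` and no arcs
between `A` and `B`, then some `x ∈ A`, `y ∈ B` form a dominating pair with common
out-neighbour `u` and `d(x) + d(y) ≤ 2a + 2`. -/
theorem stmt19 [Fintype V] (Arc : V → V → Prop) (X Y : Set V) (a : ℕ) (ha : 2 ≤ a)
    (hX : X.ncard = a) (hY : Y.ncard = a) (hbip : IsBipartition Arc X Y)
    (hstrong : StrongConn Arc)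
    (A B : Set V) (u : V) (hA : A.Nonempty) (hB : B.Nonempty)
    (hdisj : Disjoint A B) (hu : u ∉ A ∪ B) (hcover : A ∪ B ∪ {u} = Set.univ)
    (hnoarc : ∀ x ∈ A, ∀ y ∈ B, ¬ Arc x y ∧ ¬ Arc y x) :
    ∃ x ∈ A, ∃ y ∈ B, Arc x u ∧ Arc y u ∧ DomPair Arc x y ∧
      deg Arc x + deg Arc y ≤ 2 * a + 2 := by
  obtain ⟨a0, ha0⟩ := hA
  obtain ⟨b0, hb0⟩ := hB
  obtain ⟨x, hx, hxu⟩ :=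
    exists_arc_to_u Arc A B u hcover hdisj hnoarc hb0 (hstrong a0 b0) ha0
  have hcover' : B ∪ A ∪ {u} = Set.univ := by
    rw [Set.union_comm B A]; exact hcover
  have hnoarc' : ∀ p ∈ B, ∀ q ∈ A, ¬ Arc p q ∧ ¬ Arc q p := fun p hp q hq =>
    ⟨(hnoarc q hq p hp).2, (hnoarc q hq p hp).1⟩
  obtain ⟨y, hy, hyu⟩ :=
    exists_arc_to_u Arc B A u hcover' hdisj.symm hnoarc' ha0 (hstrong b0 a0) hb0
  have hxy : x ≠ y := fun h => Set.disjoint_left.mp hdisj hx (h ▸ hy)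
  refine ⟨x, hx, y, hy, hxu, hyu, ⟨hxy, u, hxu, hyu⟩, ?_⟩
  obtain ⟨hXY, hXYuniv, harc⟩ := hbip
  have huside : u ∈ X ∪ Y := hXYuniv ▸ Set.mem_univ u
  -- helper: side of a vertex adjacent to u
  rcases huside with huX | huY
  · -- u ∈ X, so x, y ∈ Y and all neighbours of x, y lie in X
    have hxYside : x ∈ Y := by
      rcases harc x u hxu with ⟨_, h⟩ | ⟨h, _⟩
      · exact absurd huX (Set.disjoint_right.mp hXY h)
      · exact h
    have hyYside : y ∈ Y := by
      rcases harc y u hyu with ⟨_, h⟩ | ⟨h, _⟩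
      · exact absurd huX (Set.disjoint_right.mp hXY h)
      · exact h
    have hnx : ∀ v z, v ∈ Y → (Arc v z → z ∈ X) ∧ (Arc z v → z ∈ X) := by
      intro v z hv
      constructor
      · intro h
        rcases harc v z h with ⟨h1, _⟩ | ⟨_, h2⟩
        · exact absurd hv (Set.disjoint_left.mp hXY h1)
        · exact h2
      · intro h
        rcases harc z v h with ⟨h1, _⟩ | ⟨_, h2⟩
        · exact h1
        · exact absurd hv (Set.disjoint_left.mp hXY h2)
    have := main_bound Arc X A B u x y hdisj hu hcover huX hnoarc hx hy
      (fun z hz => (hnx x z hxYside).1 hz) (fun z hz => (hnx x z hxYside).2 hz)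
      (fun z hz => (hnx y z hyYside).1 hz) (fun z hz => (hnx y z hyYside).2 hz)
    omega
  · have hxXside : x ∈ X := by
      rcases harc x u hxu with ⟨h, _⟩ | ⟨_, h⟩
      · exact h
      · exact absurd huY (Set.disjoint_left.mp hXY h)
    have hyXside : y ∈ X := by
      rcases harc y u hyu with ⟨h, _⟩ | ⟨_, h⟩
      · exact h
      · exact absurd huY (Set.disjoint_left.mp hXY h)
    have hnx : ∀ v z, v ∈ X → (Arc v z → z ∈ Y) ∧ (Arc z v → z ∈ Y) := by
      intro v z hv
      constructor
      · intro h
        rcases harc v z h with ⟨_, h2⟩ | ⟨h1, _⟩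
        · exact h2
        · exact absurd hv (Set.disjoint_right.mp hXY h1)
      · intro h
        rcases harc z v h with ⟨_, h2⟩ | ⟨h1, _⟩
        · exact absurd hv (Set.disjoint_right.mp hXY h2)
        · exact h1
    have := main_bound Arc Y A B u x y hdisj hu hcover huY hnoarc hx hy
      (fun z hz => (hnx x z hxXside).1 hz) (fun z hz => (hnx x z hxXside).2 hz)
      (fun z hz => (hnx y z hyXside).1 hz) (fun z hz => (hnx y z hyXside).2 hz)
    omega
end
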